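/- Let G be a path-connected topological group acting continuously on a locally path-connected topological space X, let π : X → X/G be the quotient map onto the orbit space (with the quotient topology), and let S ⊆ X be a union of path components of X (i.e. for every x ∈ S the path component of x in X is contained in S). Then π(S) is a union of path components of X/G: for every x ∈ S, the path component of π(x) in X/G is contained in π(S). -/

import Mathlib

/-- If a path-connected topological group `G` acts continuously on a
locally path-connected space `X` and `S ⊆ X` is a union of path components, then the
image of `S` in the orbit space `X/G` is a union of path components. -/
theorem statement3 {G X : Type*} [Group G] [TopologicalSpace G] [IsTopologicalGroup G]
    [PathConnectedSpace G] [TopologicalSpace X] [LocallyPathConnectedSpace X]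
    [MulAction G X] [ContinuousSMul G X]
    (S : Set X) (hS : ∀ x ∈ S, pathComponent x ⊆ S) :
    ∀ x ∈ S, pathComponent (Quotient.mk (MulAction.orbitRel G X) x) ⊆
      Quotient.mk (MulAction.orbitRel G X) '' S := by
  set π := Quotient.mk (MulAction.orbitRel G X)
  -- orbits lie in path components
  have horb : ∀ (g : G) (x : X), g • x ∈ pathComponent x := by
    intro g x
    have h : Joined (1 : G) g := PathConnectedSpace.joined 1 g
    have h2 : Joined ((1 : G) • x) (g • x) :=
      ⟨h.somePath.map (by continuity : Continuous fun g : G => g • x)⟩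
    rw [one_smul] at h2
    exact mem_pathComponent_iff.mpr h2
  -- S is saturated
  have hsat : π ⁻¹' (π '' S) = S := by
    ext y
    constructor
    · rintro ⟨x, hx, hxy⟩
      have : MulAction.orbitRel G X y x := Quotient.exact hxy.symm
      obtain ⟨g, rfl⟩ := this
      exact hS x hx (horb g x)
    · exact fun hy => ⟨y, hy, rfl⟩
  -- S and Sᶜ are open
  have hSopen : IsOpen S := by
    have : S = ⋃ x ∈ S, pathComponent x := by
      apply Set.Subset.antisymm
      · exact fun x hx => Set.mem_biUnion hx (mem_pathComponent_self x)
      · exact Set.iUnion₂_subset hS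
    rw [this]
    exact isOpen_biUnion fun x _ => IsOpen.pathComponent x
  have hScopen : IsOpen Sᶜ := by
    have hSc : ∀ x ∈ Sᶜ, pathComponent x ⊆ Sᶜ := by
      intro x hx y hy hyS
      exact hx (hS y hyS (mem_pathComponent_of_mem hy))
    have : Sᶜ = ⋃ x ∈ Sᶜ, pathComponent x := by
      apply Set.Subset.antisymm
      · exact fun x hx => Set.mem_biUnion hx (mem_pathComponent_self x)
      · exact Set.iUnion₂_subset hSc
    rw [this]
    exact isOpen_biUnion fun x _ => IsOpen.pathComponent x
  have hq : IsOpenQuotientMap π := MulAction.isOpenQuotientMap_quotientMk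
  -- π '' S is clopen
  have hclopen : IsClopen (π '' S) := by
    constructor
    · have : (π '' S)ᶜ = π '' Sᶜ := by
        ext y
        obtain ⟨x, rfl⟩ := hq.surjective y
        simp only [Set.mem_compl_iff, Set.mem_image]
        constructor
        · intro h
          refine ⟨x, fun hx => h ⟨x, hx, rfl⟩, rfl⟩
        · rintro ⟨z, hz, hzx⟩ hmem
          have : x ∈ π ⁻¹' (π '' S) := hmem
          rw [hsat] at this
          have hz' : z ∈ π ⁻¹' (π '' S) := by
            show π z ∈ π '' S
            rw [hzx]
            exact ⟨x, this, rfl⟩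
          rw [hsat] at hz'
          exact hz hz'
      rw [← isOpen_compl_iff, this]
      exact hq.isOpenMap _ hScopen
    · exact hq.isOpenMap _ hSopen
  intro x hx y hy
  have : y ∈ connectedComponent (π x) := pathComponent_subset_component _ hy
  exact hclopen.connectedComponent_subset ⟨x, hx, rfl⟩ this
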